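/- For the isotropic state ρ(p,d) = p P₊ + (1−p) I/d² on ℂ^d ⊗ ℂ^d with −1/(d²−1) ≤ p ≤ 1, the partial transpose ρ(p,d)^{T_B} is positive semidefinite if and only if p ≤ 1/(d+1), equivalently the singlet fraction F = Tr(ρ P₊) satisfies F ≤ 1/d. -/

import Mathlib

open Matrix
open scoped ComplexOrder

noncomputable def ptB {m n : ℕ}
    (M : Matrix (Fin m × Fin n) (Fin m × Fin n) ℂ) :
    Matrix (Fin m × Fin n) (Fin m × Fin n) ℂ :=
  fun p q => M (p.1, q.2) (q.1, p.2)

noncomputable def Pplus (d : ℕ) : Matrix (Fin d × Fin d) (Fin d × Fin d) ℂ :=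
  fun p q => (if p.1 = p.2 then 1 else 0) * (if q.1 = q.2 then 1 else 0) / d

noncomputable def Vswap (d : ℕ) : Matrix (Fin d × Fin d) (Fin d × Fin d) ℂ :=
  fun a b => (if a.1 = b.2 then 1 else 0) * (if a.2 = b.1 then 1 else 0)

lemma Vswap_herm (d : ℕ) : (Vswap d)ᴴ = Vswap d := by
  ext ⟨i,j⟩ ⟨k,l⟩
  simp only [conjTranspose_apply, Vswap, star_mul', apply_ite, star_one, star_zero]
  split_ifs <;> simp_all [eq_comm]

lemma Vswap_sq (d : ℕ) : Vswap d * Vswap d = 1 := by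
  ext ⟨i,j⟩ ⟨k,l⟩
  simp [Vswap, mul_apply, Matrix.one_apply, Fintype.sum_prod_type, ite_and,
    Finset.sum_ite_eq, Finset.sum_ite_eq', Prod.ext_iff, eq_comm]
  split_ifs <;> rfl

lemma Psym_psd (d : ℕ) : ((2:ℂ)⁻¹ • (1 + Vswap d)).PosSemidef := by
  have h1 : ((2:ℂ)⁻¹ • (1 + Vswap d))ᴴ = (2:ℂ)⁻¹ • (1 + Vswap d) := by
    simp [conjTranspose_smul, conjTranspose_add, Vswap_herm, ← Complex.ofReal_ofNat]
  have h2 : ((2:ℂ)⁻¹ • (1 + Vswap d)) * ((2:ℂ)⁻¹ • (1 + Vswap d)) =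
      (2:ℂ)⁻¹ • (1 + Vswap d) := by
    rw [smul_mul_assoc, mul_smul_comm, smul_smul]
    rw [add_mul, mul_add, mul_add, Vswap_sq, one_mul, mul_one, one_mul]
    rw [show (1 + Vswap d + (Vswap d + 1)) = (2:ℂ) • (1 + Vswap d) by
      rw [two_smul]; abel]
    rw [smul_smul]
    norm_num
  have := posSemidef_conjTranspose_mul_self ((2:ℂ)⁻¹ • (1 + Vswap d))
  rwa [h1, h2] at this

lemma Panti_psd (d : ℕ) : ((2:ℂ)⁻¹ • (1 - Vswap d)).PosSemidef := by
  have h1 : ((2:ℂ)⁻¹ • (1 - Vswap d))ᴴ = (2:ℂ)⁻¹ • (1 - Vswap d) := by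
    simp [conjTranspose_smul, conjTranspose_sub, Vswap_herm, ← Complex.ofReal_ofNat]
  have h2 : ((2:ℂ)⁻¹ • (1 - Vswap d)) * ((2:ℂ)⁻¹ • (1 - Vswap d)) =
      (2:ℂ)⁻¹ • (1 - Vswap d) := by
    rw [smul_mul_assoc, mul_smul_comm, smul_smul]
    rw [sub_mul, mul_sub, mul_sub, Vswap_sq, one_mul, mul_one, one_mul]
    rw [show (1 - Vswap d - (Vswap d - 1)) = (2:ℂ) • (1 - Vswap d) by
      rw [two_smul]; abel]
    rw [smul_smul]
    norm_num
  have := posSemidef_conjTranspose_mul_self ((2:ℂ)⁻¹ • (1 - Vswap d))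
  rwa [h1, h2] at this

lemma smul_psd {n : Type*} [Fintype n] {M : Matrix n n ℂ} (hM : M.PosSemidef)
    {c : ℝ} (hc : 0 ≤ c) : ((c:ℂ) • M).PosSemidef := by
  refine Matrix.PosSemidef.of_dotProduct_mulVec_nonneg ?_ (fun x => ?_)
  · rw [IsHermitian, conjTranspose_smul, hM.1.eq]
    simp
  · rw [smul_mulVec, dotProduct_smul, smul_eq_mul]
    exact mul_nonneg (by exact_mod_cast hc) (hM.dotProduct_mulVec_nonneg x)

lemma quad_form {n : Type*} [Fintype n] [DecidableEq n]
    (N : Matrix n n ℂ) (u v : n) :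
    star (fun q => (if q = u then 1 else 0) - (if q = v then (1:ℂ) else 0)) ⬝ᵥ
      (N *ᵥ (fun q => (if q = u then 1 else 0) - (if q = v then (1:ℂ) else 0))) =
      N u u - N u v - N v u + N v v := by
  set x : n → ℂ := fun q => (if q = u then 1 else 0) - (if q = v then (1:ℂ) else 0) with hx
  have hs : star x = x := by
    funext q
    simp [hx, Pi.star_apply, apply_ite (star : ℂ → ℂ)]
  have hm : ∀ a, (N *ᵥ x) a = N a u - N a v := by
    intro a
    simp [mulVec, dotProduct, hx, mul_sub, Finset.sum_sub_distrib, mul_ite,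
      mul_one, mul_zero, Finset.sum_ite_eq']
  rw [hs]
  simp only [dotProduct, hm, hx, sub_mul, ite_mul, one_mul, zero_mul,
    Finset.sum_sub_distrib, Finset.sum_ite_eq', Finset.mem_univ, if_true]
  rw [← hx, hm, hm]
  ring

lemma ptB_eq (d : ℕ) (p : ℝ) (hd : d ≠ 0) :
    ptB ((p : ℂ) • Pplus d + ((1 - p : ℝ) : ℂ) • (((d : ℂ) ^ 2)⁻¹ •
        (1 : Matrix (Fin d × Fin d) (Fin d × Fin d) ℂ))) =
      ((p/d : ℝ) : ℂ) • Vswap d + (((1-p)/d^2 : ℝ) : ℂ) • 1 := by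
  ext ⟨i,j⟩ ⟨k,l⟩
  have hdC : (d:ℂ) ≠ 0 := Nat.cast_ne_zero.mpr hd
  simp only [ptB, Pplus, Vswap, Matrix.add_apply, Matrix.smul_apply, Matrix.one_apply,
    Prod.mk.injEq, ite_and, smul_eq_mul]
  push_cast
  split_ifs <;> subst_vars <;>
    first
      | exact absurd rfl (by assumption)
      | (field_simp; try ring)

lemma decomp (d : ℕ) (p : ℝ) :
    ((p/d : ℝ) : ℂ) • Vswap d + (((1-p)/d^2 : ℝ) : ℂ) • 1 =
      (((1-p)/d^2 + p/d : ℝ) : ℂ) • ((2:ℂ)⁻¹ • (1 + Vswap d)) +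
      (((1-p)/d^2 - p/d : ℝ) : ℂ) • ((2:ℂ)⁻¹ • (1 - Vswap d)) := by
  push_cast
  module

lemma Pplus_mul_self (d : ℕ) (hd : d ≠ 0) : Pplus d * Pplus d = Pplus d := by
  ext ⟨i,j⟩ ⟨k,l⟩
  have hdC : (d:ℂ) ≠ 0 := Nat.cast_ne_zero.mpr hd
  simp only [Pplus, mul_apply, Fintype.sum_prod_type]
  have key : ∀ a b : Fin d,
      ((if i = j then (1:ℂ) else 0) * (if a = b then 1 else 0) / d) *
        ((if a = b then (1:ℂ) else 0) * (if k = l then 1 else 0) / d) =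
      (if a = b then ((if i = j then (1:ℂ) else 0) * (if k = l then 1 else 0) / d^2)
        else 0) := by
    intro a b; split_ifs <;> ring
  simp only [key, Finset.sum_ite_eq, Finset.mem_univ, if_true]
  rw [Finset.sum_const, Finset.card_univ, Fintype.card_fin, nsmul_eq_mul]
  split_ifs <;> field_simp <;> ring

lemma Pplus_trace (d : ℕ) (hd : d ≠ 0) : (Pplus d).trace = 1 := by
  have hdC : (d:ℂ) ≠ 0 := Nat.cast_ne_zero.mpr hd
  rw [Matrix.trace]
  simp only [diag_apply, Pplus, Fintype.sum_prod_type]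
  have key : ∀ i j : Fin d,
      ((if i = j then (1:ℂ) else 0) * (if i = j then 1 else 0) / d) =
        if i = j then (d:ℂ)⁻¹ else 0 := by
    intro i j; split_ifs <;> simp [div_eq_mul_inv]
  simp only [key, Finset.sum_ite_eq, Finset.mem_univ, if_true]
  rw [Finset.sum_const, Finset.card_univ, Fintype.card_fin, nsmul_eq_mul,
    mul_inv_cancel₀ hdC]

theorem isotropic_ppt_iff (d : ℕ) (hd : 2 ≤ d) (p : ℝ)
    (hp1 : -(1 / ((d : ℝ) ^ 2 - 1)) ≤ p) (hp2 : p ≤ 1) :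
    ((ptB ((p : ℂ) • Pplus d + ((1 - p : ℝ) : ℂ) • (((d : ℂ) ^ 2)⁻¹ •
        (1 : Matrix (Fin d × Fin d) (Fin d × Fin d) ℂ)))).PosSemidef ↔
      p ≤ 1 / ((d : ℝ) + 1)) ∧
    (p ≤ 1 / ((d : ℝ) + 1) ↔
      (((p : ℂ) • Pplus d + ((1 - p : ℝ) : ℂ) • (((d : ℂ) ^ 2)⁻¹ •
        (1 : Matrix (Fin d × Fin d) (Fin d × Fin d) ℂ))) * Pplus d).trace ≤
        ((d : ℂ))⁻¹) := by
  have hd0 : d ≠ 0 := by omega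
  have hdR : (2:ℝ) ≤ (d:ℝ) := by exact_mod_cast hd
  have hdpos : (0:ℝ) < d := by linarith
  have hd1pos : (0:ℝ) < (d:ℝ) + 1 := by linarith
  have hdC : (d:ℂ) ≠ 0 := Nat.cast_ne_zero.mpr hd0
  have hd2pos : (0:ℝ) < (d:ℝ)^2 := by positivity
  constructor
  · rw [ptB_eq d p hd0]
    constructor
    · intro h
      set u : Fin d × Fin d := (⟨0, by omega⟩, ⟨1, by omega⟩) with hu
      set v : Fin d × Fin d := (⟨1, by omega⟩, ⟨0, by omega⟩) with hv
      have hq := h.dotProduct_mulVec_nonneg (fun q => (if q = u then 1 else 0) - (if q = v then (1:ℂ) else 0))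
      rw [quad_form] at hq
      set M := ((p/d : ℝ) : ℂ) • Vswap d + (((1-p)/d^2 : ℝ) : ℂ) •
        (1 : Matrix (Fin d × Fin d) (Fin d × Fin d) ℂ) with hM
      have hMval : M u u - M u v - M v u + M v v =
          ((2*((1-p)/(d:ℝ)^2 - p/d) : ℝ) : ℂ) := by
        simp only [hM, hu, hv, Matrix.add_apply, Matrix.smul_apply, Matrix.one_apply,
          Vswap, smul_eq_mul, Prod.mk.injEq, Fin.mk.injEq]
        norm_num
        push_cast
        ring
      rw [hMval, Complex.zero_le_real] at hq
      have e3 : (1-p)/(d:ℝ)^2 - p/d = (1 - p*((d:ℝ)+1))/d^2 := by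
        field_simp; ring
      rw [e3] at hq
      have h1 : (0:ℝ) ≤ 1 - p*((d:ℝ)+1) := by
        have h2 : (0:ℝ) ≤ (1 - p*((d:ℝ)+1))/d^2 := by linarith
        have := mul_nonneg h2 (le_of_lt hd2pos)
        rwa [div_mul_cancel₀ _ (ne_of_gt hd2pos)] at this
      rw [le_div_iff₀ hd1pos]
      linarith
    · intro hple
      rw [decomp d p]
      have hA : (0:ℝ) ≤ (1-p)/(d:ℝ)^2 + p/d := by
        have e : (1-p)/(d:ℝ)^2 + p/d = (1 - p + p*d)/d^2 := by field_simp
        rw [e]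
        apply div_nonneg _ (le_of_lt hd2pos)
        rcases le_or_gt 0 p with h|h
        · nlinarith
        · have hdm : (0:ℝ) < (d:ℝ)^2 - 1 := by nlinarith
          have hp1' : -1 ≤ p * ((d:ℝ)^2 - 1) := by
            rw [← neg_div] at hp1
            have := (div_le_iff₀ hdm).mp hp1
            linarith
          nlinarith
      have hB : (0:ℝ) ≤ (1-p)/(d:ℝ)^2 - p/d := by
        have e : (1-p)/(d:ℝ)^2 - p/d = (1 - p*((d:ℝ)+1))/d^2 := by field_simp; ring
        rw [e]
        apply div_nonneg _ (le_of_lt hd2pos)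
        have := (le_div_iff₀ hd1pos).mp hple
        linarith
      exact ((smul_psd (Psym_psd d) hA).add (smul_psd (Panti_psd d) hB))
  · have htr : (((p : ℂ) • Pplus d + ((1 - p : ℝ) : ℂ) • (((d : ℂ) ^ 2)⁻¹ •
        (1 : Matrix (Fin d × Fin d) (Fin d × Fin d) ℂ))) * Pplus d).trace =
        ((p + (1-p)/(d:ℝ)^2 : ℝ) : ℂ) := by
      rw [add_mul, smul_mul_assoc, Pplus_mul_self d hd0, smul_mul_assoc,
        smul_mul_assoc, one_mul, trace_add, trace_smul, trace_smul, trace_smul,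
        Pplus_trace d hd0]
      push_cast
      field_simp
      simp only [smul_eq_mul, mul_one]
      field_simp
    rw [htr, show ((d:ℂ))⁻¹ = (((d:ℝ)⁻¹ : ℝ) : ℂ) by push_cast; ring,
      Complex.real_le_real]
    have e : (d:ℝ)⁻¹ - (p + (1-p)/d^2) = (1 - p*((d:ℝ)+1)) * ((d:ℝ)-1) / d^2 := by
      field_simp; ring
    constructor
    · intro h
      have h0 : (0:ℝ) ≤ 1 - p*((d:ℝ)+1) := by
        have := (le_div_iff₀ hd1pos).mp h
        linarith
      have h1 : (0:ℝ) ≤ (1 - p*((d:ℝ)+1)) * ((d:ℝ)-1) / d^2 :=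
        div_nonneg (mul_nonneg h0 (by linarith)) (le_of_lt hd2pos)
      linarith [e ▸ h1]
    · intro h
      have h1 : (0:ℝ) ≤ (1 - p*((d:ℝ)+1)) * ((d:ℝ)-1) / d^2 := by
        rw [← e]; linarith
      have h2 := mul_nonneg h1 (le_of_lt hd2pos)
      rw [div_mul_cancel₀ _ (ne_of_gt hd2pos)] at h2
      have h3 : (0:ℝ) ≤ 1 - p*((d:ℝ)+1) := by nlinarith
      rw [le_div_iff₀ hd1pos]
      linarith
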